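/- Let n be a positive natural, let Q : Matrix (Fin n) (Fin n) ℝ be symmetric positive definite, let c > 0 be real, and let a, x̄ : Fin n → ℝ and b : ℝ. Then the following are equivalent: (i) for every η : Fin n → ℝ with η ⬝ᵥ (Q⁻¹ *ᵥ η) ≤ 1/c, one has a ⬝ᵥ (x̄ + η) ≤ b; (ii) ‖S *ᵥ a‖ ≤ b − a ⬝ᵥ x̄, where S is the positive semidefinite square root of the matrix (1/c)·Q and ‖·‖ denotes the Euclidean norm √(v ⬝ᵥ v). -/

import Mathlib

open Matrix

private lemma dot_cs {n : ℕ} (x y : Fin n → ℝ) :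
    x ⬝ᵥ y ≤ Real.sqrt (x ⬝ᵥ x) * Real.sqrt (y ⬝ᵥ y) := by
  simpa [dotProduct, sq] using Real.sum_mul_le_sqrt_mul_sqrt Finset.univ x y

private lemma dot_self_nonneg' {n : ℕ} (x : Fin n → ℝ) : 0 ≤ x ⬝ᵥ x :=
  Finset.sum_nonneg fun _ _ => mul_self_nonneg _

private lemma symm_dot {n : ℕ} {M : Matrix (Fin n) (Fin n) ℝ} (hM : Mᵀ = M)
    (x y : Fin n → ℝ) : (M *ᵥ x) ⬝ᵥ y = x ⬝ᵥ (M *ᵥ y) := by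
  rw [dotProduct_mulVec, ← hM, vecMul_transpose, hM, dotProduct_comm]

theorem funnel_halfspace_containment
    (n : ℕ) (hn : 0 < n)
    (Q : Matrix (Fin n) (Fin n) ℝ) (hQ : Q.PosDef)
    (c : ℝ) (hc : 0 < c)
    (a xbar : Fin n → ℝ) (b : ℝ)
    (S : Matrix (Fin n) (Fin n) ℝ) (hS : S.PosSemidef)
    (hS2 : S * S = c⁻¹ • Q) :
    (∀ η : Fin n → ℝ, η ⬝ᵥ (Q⁻¹ *ᵥ η) ≤ 1 / c → a ⬝ᵥ (xbar + η) ≤ b) ↔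
      Real.sqrt ((S *ᵥ a) ⬝ᵥ (S *ᵥ a)) ≤ b - a ⬝ᵥ xbar := by
  have hSsymm : Sᵀ = S := hS.1
  have hSisymm : (S⁻¹)ᵀ = S⁻¹ := by rw [transpose_nonsing_inv, hSsymm]
  have hSdet : IsUnit S.det := by
    have hdQ : ((c:ℝ)⁻¹ • Q).det ≠ 0 := by
      rw [det_smul]
      exact mul_ne_zero (pow_ne_zero _ (by positivity)) (ne_of_gt hQ.det_pos)
    have h : S.det * S.det = (c⁻¹ • Q).det := by rw [← det_mul, hS2]
    exact isUnit_iff_ne_zero.2 (fun h0 => hdQ (by rw [← h, h0, mul_zero]))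
  have hQc : Q = c • (S * S) := by
    rw [hS2, smul_smul, mul_inv_cancel₀ (ne_of_gt hc), one_smul]
  have hQinv : Q⁻¹ = c⁻¹ • (S⁻¹ * S⁻¹) := by
    refine inv_eq_left_inv ?_
    rw [hQc, smul_mul, Matrix.mul_smul, smul_smul, inv_mul_cancel₀ (ne_of_gt hc)]
    rw [one_smul, Matrix.mul_assoc, ← Matrix.mul_assoc S⁻¹ S S,
      Matrix.nonsing_inv_mul S hSdet, Matrix.one_mul, Matrix.nonsing_inv_mul S hSdet]
  constructor
  · intro h
    set r := (S *ᵥ a) ⬝ᵥ (S *ᵥ a) with hr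
    rcases (dot_self_nonneg' (S *ᵥ a)).eq_or_lt with h0 | hrpos
    · have h1 : Real.sqrt r = 0 := by rw [hr, ← h0, Real.sqrt_zero]
      have h2 := h 0 (by simp [mulVec_zero]; positivity)
      simp only [add_zero] at h2
      linarith
    · set t := (Real.sqrt r)⁻¹ with ht
      have hrpos' : (0:ℝ) < r := hrpos
      have hsr : 0 < Real.sqrt r := Real.sqrt_pos.2 hrpos'
      have hmul : Real.sqrt r * Real.sqrt r = r := Real.mul_self_sqrt (le_of_lt hrpos')
      have htr : t * r = Real.sqrt r := by
        rw [ht, inv_mul_eq_div, Real.div_sqrt]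
      have ht2 : t * t * r = 1 := by
        rw [ht, ← hmul]; field_simp
        rw [Real.sqrt_sq hsr.le]
      have hQSS : Q⁻¹ *ᵥ (S *ᵥ (S *ᵥ a)) = c⁻¹ • a := by
        rw [mulVec_mulVec, mulVec_mulVec, Matrix.mul_assoc, hS2,
          Matrix.mul_smul, Matrix.nonsing_inv_mul Q (isUnit_iff_ne_zero.2 (ne_of_gt hQ.det_pos)),
          smul_mulVec, one_mulVec]
      have hva : (S *ᵥ (S *ᵥ a)) ⬝ᵥ a = r := by
        rw [symm_dot hSsymm, hr]
      set η := t • (S *ᵥ (S *ᵥ a)) with hη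
      have hcon : η ⬝ᵥ (Q⁻¹ *ᵥ η) = c⁻¹ := by
        rw [hη, mulVec_smul, hQSS, smul_dotProduct, dotProduct_smul, dotProduct_smul,
          hva, smul_eq_mul, smul_eq_mul, smul_eq_mul]
        linear_combination c⁻¹ * ht2
      have hgoal := h η (by rw [hcon, one_div])
      rw [dotProduct_add, hη, dotProduct_smul, smul_eq_mul] at hgoal
      have haη : a ⬝ᵥ (S *ᵥ (S *ᵥ a)) = r := by
        rw [dotProduct_comm]
        exact hva
      rw [haη, htr] at hgoal
      linarith
  · intro h η hη
    set w := S⁻¹ *ᵥ η with hw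
    have hηw : η = S *ᵥ w := by
      rw [hw, mulVec_mulVec, Matrix.mul_nonsing_inv S hSdet, one_mulVec]
    have hkey : η ⬝ᵥ (Q⁻¹ *ᵥ η) = c⁻¹ * (w ⬝ᵥ w) := by
      rw [hQinv, smul_mulVec, dotProduct_smul, smul_eq_mul, ← mulVec_mulVec,
        ← symm_dot hSisymm η (S⁻¹ *ᵥ η), hw]
    have hww : w ⬝ᵥ w ≤ 1 := by
      rw [hkey, one_div] at hη
      nlinarith [mul_le_mul_of_nonneg_left hη hc.le, mul_inv_cancel₀ (ne_of_gt hc)]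
    have haη : a ⬝ᵥ η ≤ Real.sqrt ((S *ᵥ a) ⬝ᵥ (S *ᵥ a)) := by
      calc a ⬝ᵥ η = (S *ᵥ a) ⬝ᵥ w := by
            rw [hηw]; exact (symm_dot hSsymm a w).symm
        _ ≤ Real.sqrt ((S *ᵥ a) ⬝ᵥ (S *ᵥ a)) * Real.sqrt (w ⬝ᵥ w) := dot_cs _ _
        _ ≤ Real.sqrt ((S *ᵥ a) ⬝ᵥ (S *ᵥ a)) * 1 := by
            apply mul_le_mul_of_nonneg_left _ (Real.sqrt_nonneg _)
            calc Real.sqrt (w ⬝ᵥ w) ≤ Real.sqrt 1 := Real.sqrt_le_sqrt hww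
              _ = 1 := Real.sqrt_one
        _ = _ := mul_one _
    rw [dotProduct_add]
    linarith
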